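/- arXiv:2006.05005 — 3 statements merged into one kernel-verified Lean document; each statement's English description precedes it below -/
import Mathlib

section
/- For p > 1, β₀ > 0, L₀ > 0, t₀ ≥ 0, the infimum over σ ∈ (2L₀/((p−1)β₀) − t₀, ∞) of the expression t₀ + β₀(t₀+σ)²/((p−1)β₀(t₀+σ) − 2L₀) equals t₀ + 8L₀/((p−1)²β₀). -/
/-- for `p > 1`, `β₀ > 0`, `L₀ > 0`, `t₀ ≥ 0`, the infimum over
`σ ∈ (2L₀/((p−1)β₀) − t₀, ∞)` of `t₀ + β₀(t₀+σ)²/((p−1)β₀(t₀+σ) − 2L₀)`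
equals `t₀ + 8L₀/((p−1)²β₀)`. -/
theorem stmt8 (p β₀ L₀ t₀ : ℝ) (hp : 1 < p) (hβ : 0 < β₀) (hL : 0 < L₀) (ht : 0 ≤ t₀) :
    sInf ((fun σ => t₀ + β₀ * (t₀ + σ) ^ 2 / ((p - 1) * β₀ * (t₀ + σ) - 2 * L₀)) ''
        Set.Ioi (2 * L₀ / ((p - 1) * β₀) - t₀)) =
      t₀ + 8 * L₀ / ((p - 1) ^ 2 * β₀) := by
  have hp1 : 0 < p - 1 := by linarith
  have haa : 0 < (p - 1) * β₀ := mul_pos hp1 hβ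
  have ha2 : 0 < (p - 1) ^ 2 * β₀ := by positivity
  have lb : ∀ y ∈ (fun σ => t₀ + β₀ * (t₀ + σ) ^ 2 / ((p - 1) * β₀ * (t₀ + σ) - 2 * L₀)) ''
      Set.Ioi (2 * L₀ / ((p - 1) * β₀) - t₀), t₀ + 8 * L₀ / ((p - 1) ^ 2 * β₀) ≤ y := by
    rintro y ⟨σ, hσ, rfl⟩
    simp only [Set.mem_Ioi] at hσ
    have hx : 2 * L₀ / ((p - 1) * β₀) < t₀ + σ := by linarith
    have hd : 0 < (p - 1) * β₀ * (t₀ + σ) - 2 * L₀ := by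
      have h := (div_lt_iff₀ haa).mp hx
      nlinarith
    have key : 8 * L₀ / ((p - 1) ^ 2 * β₀) ≤
        β₀ * (t₀ + σ) ^ 2 / ((p - 1) * β₀ * (t₀ + σ) - 2 * L₀) := by
      rw [div_le_div_iff₀ ha2 hd]
      nlinarith [sq_nonneg ((p - 1) * β₀ * (t₀ + σ) - 4 * L₀)]
    simp only
    linarith
  have mem : t₀ + 8 * L₀ / ((p - 1) ^ 2 * β₀) ∈
      (fun σ => t₀ + β₀ * (t₀ + σ) ^ 2 / ((p - 1) * β₀ * (t₀ + σ) - 2 * L₀)) ''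
      Set.Ioi (2 * L₀ / ((p - 1) * β₀) - t₀) := by
    refine ⟨4 * L₀ / ((p - 1) * β₀) - t₀, ?_, ?_⟩
    · simp only [Set.mem_Ioi]
      have : 2 * L₀ / ((p - 1) * β₀) < 4 * L₀ / ((p - 1) * β₀) := by
        gcongr
        norm_num
      linarith
    · have hx : t₀ + (4 * L₀ / ((p - 1) * β₀) - t₀) = 4 * L₀ / ((p - 1) * β₀) := by ring
      simp only [hx]
      have hne : (p - 1) * β₀ ≠ 0 := ne_of_gt haa
      have hden : (p - 1) * β₀ * (4 * L₀ / ((p - 1) * β₀)) - 2 * L₀ = 2 * L₀ := by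
        field_simp
        ring
      rw [hden]
      field_simp
      ring
  refine le_antisymm (csInf_le ⟨_, lb⟩ mem) (le_csInf ⟨_, mem⟩ lb)
end

section
/- Let θ > 0, ψ : [t₀, t₁] → (0, ∞) twice differentiable with ψ''ψ − (1+θ)(ψ')² ≥ 0 on [t₀, t₁], ψ(t₀) > 0, ψ'(t₀) > 0. Then the function φ(t) = ψ(t)^{−θ} is concave on [t₀, t₁] with φ'(t₀) < 0; consequently ψ'(t) > 0 for all t ∈ [t₀, t₁] and ψ(t) ≥ ψ(t₀) (1 − θ ψ'(t₀)(t − t₀)/ψ(t₀))^{−1/θ} whenever the right-hand side is defined. -/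
/-- under the concavity inequality `ψ''ψ − (1+θ)(ψ')² ≥ 0` on `[t₀,t₁]` with
`ψ > 0`, `ψ'(t₀) > 0`, the function `φ = ψ^{−θ}` is concave on `[t₀,t₁]` with `φ'(t₀) < 0`;
moreover `ψ' > 0` on `[t₀,t₁]` and `ψ(t) ≥ ψ(t₀)(1 − θψ'(t₀)(t−t₀)/ψ(t₀))^{−1/θ}`
whenever the base is positive. -/
theorem stmt17 (θ t₀ t₁ : ℝ) (hθ : 0 < θ) (ht : t₀ < t₁) (ψ : ℝ → ℝ)
    (hpos : ∀ t ∈ Set.Icc t₀ t₁, 0 < ψ t)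
    (hd1 : ∀ t ∈ Set.Icc t₀ t₁, DifferentiableAt ℝ ψ t)
    (hd2 : ∀ t ∈ Set.Icc t₀ t₁, DifferentiableAt ℝ (deriv ψ) t)
    (hineq : ∀ t ∈ Set.Icc t₀ t₁, 0 ≤ deriv (deriv ψ) t * ψ t - (1 + θ) * (deriv ψ t) ^ 2)
    (hψ0' : 0 < deriv ψ t₀) :
    ConcaveOn ℝ (Set.Icc t₀ t₁) (fun t => ψ t ^ (-θ)) ∧
    deriv (fun t => ψ t ^ (-θ)) t₀ < 0 ∧
    (∀ t ∈ Set.Icc t₀ t₁, 0 < deriv ψ t) ∧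
    (∀ t ∈ Set.Icc t₀ t₁, 0 < 1 - θ * deriv ψ t₀ * (t - t₀) / ψ t₀ →
      ψ t₀ * (1 - θ * deriv ψ t₀ * (t - t₀) / ψ t₀) ^ (-(1 / θ)) ≤ ψ t) := by
  set I := Set.Icc t₀ t₁ with hI
  have ht₀ : t₀ ∈ I := Set.left_mem_Icc.2 ht.le
  set φ : ℝ → ℝ := fun t => ψ t ^ (-θ) with hφdef
  set φ' : ℝ → ℝ := fun t => deriv ψ t * (-θ) * ψ t ^ (-θ - 1) with hφ'def
  -- derivative of φ
  have hφd : ∀ t ∈ I, HasDerivAt φ (φ' t) t := fun t htI =>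
    ((hd1 t htI).hasDerivAt).rpow_const (Or.inl (hpos t htI).ne')
  -- derivative of φ'
  have hφ'd : ∀ t ∈ I, HasDerivAt φ'
      (deriv (deriv ψ) t * (-θ) * ψ t ^ (-θ - 1) +
        deriv ψ t * (-θ) * (deriv ψ t * (-θ - 1) * ψ t ^ (-θ - 1 - 1))) t := by
    intro t htI
    exact ((hd2 t htI).hasDerivAt.mul_const (-θ)).mul
      (((hd1 t htI).hasDerivAt).rpow_const (Or.inl (hpos t htI).ne'))
  -- the second derivative is nonpositive on I
  have hφ''le : ∀ t ∈ I,
      deriv (deriv ψ) t * (-θ) * ψ t ^ (-θ - 1) +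
        deriv ψ t * (-θ) * (deriv ψ t * (-θ - 1) * ψ t ^ (-θ - 1 - 1)) ≤ 0 := by
    intro t htI
    have hψt := hpos t htI
    have hE : (0:ℝ) < ψ t ^ (-θ - 1 - 1) := Real.rpow_pos_of_pos hψt _
    have hsplit : ψ t ^ (-θ - 1) = ψ t ^ (-θ - 1 - 1) * ψ t := by
      rw [← Real.rpow_add_one hψt.ne']; ring_nf
    rw [hsplit]
    have hkey := hineq t htI
    have : deriv (deriv ψ) t * (-θ) * (ψ t ^ (-θ - 1 - 1) * ψ t) +
        deriv ψ t * (-θ) * (deriv ψ t * (-θ - 1) * ψ t ^ (-θ - 1 - 1)) =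
        -θ * ψ t ^ (-θ - 1 - 1) *
          (deriv (deriv ψ) t * ψ t - (1 + θ) * (deriv ψ t) ^ 2) := by ring
    rw [this]
    have : 0 ≤ θ * ψ t ^ (-θ - 1 - 1) *
        (deriv (deriv ψ) t * ψ t - (1 + θ) * (deriv ψ t) ^ 2) :=
      mul_nonneg (mul_nonneg hθ.le hE.le) hkey
    nlinarith
  -- φ' is antitone on I
  have hφ'cont : ContinuousOn φ' I := fun t htI =>
    ((hφ'd t htI).differentiableAt.continuousAt).continuousWithinAt
  have hanti : AntitoneOn φ' I := by
    apply antitoneOn_of_deriv_nonpos (convex_Icc t₀ t₁) hφ'cont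
    · intro x hx
      exact (hφ'd x (interior_subset hx)).differentiableAt.differentiableWithinAt
    · intro x hx
      rw [(hφ'd x (interior_subset hx)).deriv]
      exact hφ''le x (interior_subset hx)
  have hderiv_eq : ∀ t ∈ I, deriv φ t = φ' t := fun t htI => (hφd t htI).deriv
  -- concavity
  have hφcont : ContinuousOn φ I := fun t htI =>
    ((hφd t htI).differentiableAt.continuousAt).continuousWithinAt
  have hconc : ConcaveOn ℝ I φ := by
    apply AntitoneOn.concaveOn_of_deriv (convex_Icc t₀ t₁) hφcont
    · intro x hx
      exact (hφd x (interior_subset hx)).differentiableAt.differentiableWithinAt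
    · intro x hx y hy hxy
      rw [hderiv_eq x (interior_subset hx), hderiv_eq y (interior_subset hy)]
      exact hanti (interior_subset hx) (interior_subset hy) hxy
  refine ⟨hconc, ?_, ?_, ?_⟩
  · rw [hderiv_eq t₀ ht₀]
    have h1 : (0:ℝ) < ψ t₀ ^ (-θ - 1) := Real.rpow_pos_of_pos (hpos t₀ ht₀) _
    simp only [hφ'def]
    nlinarith [mul_pos (mul_pos hψ0' hθ) h1]
  · -- ψ' > 0 on I
    intro t htI
    have hmono : MonotoneOn (deriv ψ) I := by
      apply monotoneOn_of_deriv_nonneg (convex_Icc t₀ t₁)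
        (fun s hs => ((hd2 s hs).continuousAt).continuousWithinAt)
        (fun s hs => (hd2 s (interior_subset hs)).differentiableWithinAt)
      intro x hx
      have hxI := interior_subset hx
      have h1 := hineq x hxI
      have h2 := hpos x hxI
      nlinarith [sq_nonneg (deriv ψ x)]
    exact lt_of_lt_of_le hψ0' (hmono ht₀ htI htI.1)
  · -- the lower bound
    intro t htI hB
    set B : ℝ := 1 - θ * deriv ψ t₀ * (t - t₀) / ψ t₀ with hBdef
    have hψ₀ := hpos t₀ ht₀
    have hψt := hpos t htI
    rcases eq_or_lt_of_le htI.1 with rfl | htlt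
    · have : B = 1 := by simp [hBdef]
      rw [this, Real.one_rpow, mul_one]
    · -- tangent line bound for concave φ
      have hcvx : ConvexOn ℝ I (-φ) := hconc.neg
      have hslope := hcvx.le_slope_of_hasDerivAt ht₀ htI htlt ((hφd t₀ ht₀).neg)
      rw [slope_def_field] at hslope
      have hts : (0:ℝ) < t - t₀ := sub_pos.2 htlt
      have htan : φ t ≤ φ t₀ + φ' t₀ * (t - t₀) := by
        rw [le_div_iff₀ hts] at hslope
        simp only [Pi.neg_apply] at hslope
        nlinarith [hslope]
      -- rewrite the tangent line as ψ(t₀)^(-θ) * B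
      have hsub : ψ t₀ ^ (-θ - 1) = ψ t₀ ^ (-θ) / ψ t₀ := by
        rw [Real.rpow_sub hψ₀, Real.rpow_one]
      have htan2 : φ t ≤ ψ t₀ ^ (-θ) * B := by
        have h1 : φ t₀ + φ' t₀ * (t - t₀) = ψ t₀ ^ (-θ) * B := by
          simp only [hφdef, hφ'def, hBdef, hsub]
          field_simp
          ring
        linarith [htan]
      -- conclude via antitone rpow
      have hφtpos : (0:ℝ) < φ t := Real.rpow_pos_of_pos hψt _
      have hz : -(1/θ) ≤ 0 := neg_nonpos.2 (by positivity)
      have hstep := Real.rpow_le_rpow_of_nonpos hφtpos htan2 hz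
      have hpow : ∀ x : ℝ, 0 < x → (x ^ (-θ)) ^ (-(1/θ)) = x := by
        intro x hx
        rw [← Real.rpow_mul hx.le, show (-θ) * (-(1/θ)) = 1 by field_simp, Real.rpow_one]
      calc ψ t₀ * B ^ (-(1/θ))
          = (ψ t₀ ^ (-θ) * B) ^ (-(1/θ)) := by
            rw [Real.mul_rpow (Real.rpow_pos_of_pos hψ₀ _).le hB.le, hpow _ hψ₀]
        _ ≤ (φ t) ^ (-(1/θ)) := hstep
        _ = ψ t := hpow _ hψt
end

section
/- Let p > 1 and suppose L : [0, T*) → (0, ∞) is differentiable, K : [0, T*) → ℝ is differentiable with K(0) > 0 and K'(t) ≥ 0, L'(t) ≥ (p+1)K(t), and L(t)K'(t) ≥ ((p+1)/2) L'(t)K(t) for all t. Then L blows up no later than T* ≤ 2 L(0)/((p²−1)K(0)), i.e., L cannot be extended as a finite differentiable function past that time. -/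
/-- if `L > 0` and `K` are differentiable on `[0,T*)` with `K(0) > 0`, `K' ≥ 0`,
`L' ≥ (p+1)K`, and `LK' ≥ ((p+1)/2)L'K` (`p > 1`), then `T* ≤ 2L(0)/((p²−1)K(0))`. -/
theorem stmt19 (p T : ℝ) (hp : 1 < p) (hT : 0 < T) (L K : ℝ → ℝ)
    (hLd : ∀ t ∈ Set.Ico 0 T, DifferentiableAt ℝ L t)
    (hKd : ∀ t ∈ Set.Ico 0 T, DifferentiableAt ℝ K t)
    (hLpos : ∀ t ∈ Set.Ico 0 T, 0 < L t)
    (hK0 : 0 < K 0)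
    (hK' : ∀ t ∈ Set.Ico 0 T, 0 ≤ deriv K t)
    (h1 : ∀ t ∈ Set.Ico 0 T, (p + 1) * K t ≤ deriv L t)
    (h2 : ∀ t ∈ Set.Ico 0 T, (p + 1) / 2 * deriv L t * K t ≤ L t * deriv K t) :
    T ≤ 2 * L 0 / ((p ^ 2 - 1) * K 0) := by
  have h0T : (0:ℝ) ∈ Set.Ico 0 T := ⟨le_refl 0, hT⟩
  have hL0 : 0 < L 0 := hLpos 0 h0T
  set c : ℝ := K 0 * L 0 ^ (-(p+1)/2) with hc
  have hcpos : 0 < c := mul_pos hK0 (Real.rpow_pos_of_pos hL0 _)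
  -- H := K * L^(-(p+1)/2) is monotone on [0,T)
  have hHderiv : ∀ t ∈ Set.Ico 0 T, HasDerivAt (fun t => K t * L t ^ (-(p+1)/2))
      (deriv K t * L t ^ (-(p+1)/2)
        + K t * (deriv L t * (-(p+1)/2) * L t ^ (-(p+1)/2 - 1))) t := by
    intro t ht
    exact ((hKd t ht).hasDerivAt).mul
      (((hLd t ht).hasDerivAt).rpow_const (Or.inl (hLpos t ht).ne'))
  have hHmono : MonotoneOn (fun t => K t * L t ^ (-(p+1)/2)) (Set.Ico 0 T) := by
    apply monotoneOn_of_deriv_nonneg (convex_Ico 0 T)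
    · intro t ht
      exact ((hHderiv t ht).differentiableAt.continuousAt).continuousWithinAt
    · intro t ht
      rw [interior_Ico] at ht
      exact (hHderiv t (Set.Ioo_subset_Ico_self ht)).differentiableAt.differentiableWithinAt
    · intro t ht
      rw [interior_Ico] at ht
      have ht' := Set.Ioo_subset_Ico_self ht
      rw [(hHderiv t ht').deriv]
      have hLt := hLpos t ht'
      have key := h2 t ht'
      have hpow : L t ^ (-(p+1)/2) = L t ^ (-(p+1)/2 - 1) * L t := by
        rw [← Real.rpow_add_one hLt.ne']; congr 1; ring
      have hA : (0:ℝ) ≤ L t ^ (-(p+1)/2 - 1) := (Real.rpow_pos_of_pos hLt _).le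
      rw [hpow]
      nlinarith [mul_le_mul_of_nonneg_left key hA]
  -- lower bound for K
  have hKlow : ∀ t ∈ Set.Ico 0 T, c * L t ^ ((p+1)/2) ≤ K t := by
    intro t ht
    have hm := hHmono h0T ht ht.1
    simp only at hm
    have hLt := hLpos t ht
    have hm' := mul_le_mul_of_nonneg_right hm (Real.rpow_pos_of_pos hLt ((p+1)/2)).le
    calc c * L t ^ ((p+1)/2) ≤ K t * L t ^ (-(p+1)/2) * L t ^ ((p+1)/2) := hm'
      _ = K t := by
          rw [mul_assoc, ← Real.rpow_add hLt,
            show -(p+1)/2 + (p+1)/2 = 0 by ring, Real.rpow_zero, mul_one]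
  -- F := L^(-(p-1)/2) + ((p²-1)c/2) t is antitone
  have hFderiv : ∀ t ∈ Set.Ico 0 T,
      HasDerivAt (fun t => L t ^ (-(p-1)/2) + (p^2-1)*c/2 * t)
        (deriv L t * (-(p-1)/2) * L t ^ (-(p-1)/2 - 1) + (p^2-1)*c/2) t := by
    intro t ht
    have ha := ((hLd t ht).hasDerivAt).rpow_const (p := -(p-1)/2) (Or.inl (hLpos t ht).ne')
    have hb : HasDerivAt (fun t : ℝ => (p^2-1)*c/2 * t) ((p^2-1)*c/2) t := by
      simpa using (hasDerivAt_id t).const_mul ((p^2-1)*c/2)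
    exact ha.add hb
  have hFanti : AntitoneOn (fun t => L t ^ (-(p-1)/2) + (p^2-1)*c/2 * t) (Set.Ico 0 T) := by
    apply antitoneOn_of_deriv_nonpos (convex_Ico 0 T)
    · intro t ht
      exact ((hFderiv t ht).differentiableAt.continuousAt).continuousWithinAt
    · intro t ht
      rw [interior_Ico] at ht
      exact (hFderiv t (Set.Ioo_subset_Ico_self ht)).differentiableAt.differentiableWithinAt
    · intro t ht
      rw [interior_Ico] at ht
      have ht' := Set.Ioo_subset_Ico_self ht
      rw [(hFderiv t ht').deriv]
      have hLt := hLpos t ht'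
      have hAe : L t ^ (-(p-1)/2 - 1) = L t ^ (-(p+1)/2) := by
        congr 1; ring
      rw [hAe]
      have hBpos : 0 < L t ^ (-(p+1)/2) := Real.rpow_pos_of_pos hLt _
      have hprod : L t ^ ((p+1)/2) * L t ^ (-(p+1)/2) = 1 := by
        rw [← Real.rpow_add hLt, show (p+1)/2 + -(p+1)/2 = 0 by ring, Real.rpow_zero]
      have hl' : (p+1) * c * L t ^ ((p+1)/2) ≤ deriv L t := by
        have h1t := h1 t ht'
        have hKl := hKlow t ht'
        nlinarith [hKl, h1t]
      have hl'B : (p+1) * c ≤ deriv L t * L t ^ (-(p+1)/2) := by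
        calc (p+1)*c = (p+1)*c*(L t ^ ((p+1)/2) * L t ^ (-(p+1)/2)) := by
              rw [hprod, mul_one]
          _ = ((p+1)*c*L t ^ ((p+1)/2)) * L t ^ (-(p+1)/2) := by ring
          _ ≤ deriv L t * L t ^ (-(p+1)/2) := mul_le_mul_of_nonneg_right hl' hBpos.le
      nlinarith [mul_le_mul_of_nonneg_left hl'B (by linarith : (0:ℝ) ≤ (p-1)/2)]
  -- conclude
  by_contra hcon
  push_neg at hcon
  have hp2 : 0 < p ^ 2 - 1 := by nlinarith
  have hBpos : 0 < 2 * L 0 / ((p ^ 2 - 1) * K 0) := by positivity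
  set B := 2 * L 0 / ((p ^ 2 - 1) * K 0) with hB
  set t := (B + T) / 2 with htdef
  have htmem : t ∈ Set.Ico 0 T := ⟨by simp only [htdef]; linarith, by simp only [htdef]; linarith⟩
  have hBt : B < t := by simp only [htdef]; linarith
  have hF := hFanti h0T htmem htmem.1
  simp only [mul_zero, add_zero] at hF
  have hLtpos : 0 < L t ^ (-(p-1)/2) := Real.rpow_pos_of_pos (hLpos t htmem) _
  have hid : L 0 ^ (-(p-1)/2) = L 0 * L 0 ^ (-(p+1)/2) := by
    rw [show -(p-1)/2 = 1 + (-(p+1)/2) by ring, Real.rpow_add hL0, Real.rpow_one]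
  have hD : 0 < L 0 ^ (-(p+1)/2) := Real.rpow_pos_of_pos hL0 _
  -- (p²-1)*c/2 * t < L 0 * D, with c = K0 * D
  have hstep : (p^2-1) * (K 0 * L 0 ^ (-(p+1)/2)) / 2 * t < L 0 * L 0 ^ (-(p+1)/2) := by
    rw [← hid, ← hc]; linarith
  have hstep2 : (p^2-1) * K 0 / 2 * t < L 0 := by
    have := hstep
    nlinarith [hD]
  have : 2 * L 0 < t * ((p^2-1) * K 0) := by
    rw [hB] at hBt
    rw [div_lt_iff₀ (by positivity)] at hBt
    linarith
  linarith
end
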